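/- The (2,2) sine-Gordon reduced map φ̂(y_1, y_2) = (ỹ_1, ỹ_2), where ỹ_2 = (1/y_2)·((a_1 y_1 + a_3)/(a_2 y_1 + a_1))² and ỹ_1 = (1/y_1)·((a_1 ỹ_2 + a_3)/(a_2 ỹ_2 + a_1))², preserves the function K(y_1,y_2) = (a_2² y_1² y_2² + 2a_1 a_2 (y_1² y_2 + y_1 y_2²) + a_1²(y_1² + y_2²) + 2a_1 a_3 (y_1 + y_2) + a_3²)/(y_1 y_2): K(φ̂(y_1,y_2)) = K(y_1,y_2). -/

import Mathlib

/-- The conserved quantity `K` of the `(2,2)` sine-Gordon reduced map. -/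
def sg22K {F : Type*} [Field F] (a₁ a₂ a₃ y₁ y₂ : F) : F :=
  (a₂ ^ 2 * y₁ ^ 2 * y₂ ^ 2 + 2 * a₁ * a₂ * (y₁ ^ 2 * y₂ + y₁ * y₂ ^ 2)
    + a₁ ^ 2 * (y₁ ^ 2 + y₂ ^ 2) + 2 * a₁ * a₃ * (y₁ + y₂) + a₃ ^ 2) / (y₁ * y₂)

lemma sg22K_symm {F : Type*} [Field F] (a₁ a₂ a₃ x y : F) :
    sg22K a₁ a₂ a₃ x y = sg22K a₁ a₂ a₃ y x := by
  unfold sg22K; ring_nf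

lemma sg22K_step {F : Type*} [Field F] (a₁ a₂ a₃ x y z : F)
    (hx : x ≠ 0) (hy : y ≠ 0) (hz : z ≠ 0) (hd : a₂ * x + a₁ ≠ 0)
    (e : z = (1 / y) * ((a₁ * x + a₃) / (a₂ * x + a₁)) ^ 2) :
    sg22K a₁ a₂ a₃ x z = sg22K a₁ a₂ a₃ x y := by
  have key : (a₂ * x + a₁) ^ 2 * z * y = (a₁ * x + a₃) ^ 2 := by
    rw [e]; field_simp
  unfold sg22K
  field_simp
  ring_nf
  ring_nf at key
  linear_combination (z - y) * key

/-- The `(2,2)` sine-Gordon reduced map preserves `K`. -/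
theorem sg22_K_invariant {F : Type*} [Field F] (a₁ a₂ a₃ y₁ y₂ z₁ z₂ : F)
    (h₁ : y₁ ≠ 0) (h₂ : y₂ ≠ 0)
    (hd₁ : a₂ * y₁ + a₁ ≠ 0)
    (e₂ : z₂ = (1 / y₂) * ((a₁ * y₁ + a₃) / (a₂ * y₁ + a₁)) ^ 2)
    (hd₂ : a₂ * z₂ + a₁ ≠ 0)
    (e₁ : z₁ = (1 / y₁) * ((a₁ * z₂ + a₃) / (a₂ * z₂ + a₁)) ^ 2)
    (h₁' : z₁ ≠ 0) (h₂' : z₂ ≠ 0) :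
    sg22K a₁ a₂ a₃ z₁ z₂ = sg22K a₁ a₂ a₃ y₁ y₂ := by
  calc sg22K a₁ a₂ a₃ z₁ z₂ = sg22K a₁ a₂ a₃ z₂ z₁ := sg22K_symm ..
    _ = sg22K a₁ a₂ a₃ z₂ y₁ := sg22K_step a₁ a₂ a₃ z₂ y₁ z₁ h₂' h₁ h₁' hd₂ e₁
    _ = sg22K a₁ a₂ a₃ y₁ z₂ := sg22K_symm ..
    _ = sg22K a₁ a₂ a₃ y₁ y₂ := sg22K_step a₁ a₂ a₃ y₁ y₂ z₂ h₁ h₂ h₂' hd₁ e₂
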